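/- arXiv:2409.09529 — 2 statements merged into one kernel-verified Lean document; each statement's English description precedes it below -/
import Mathlib

section
/- Let $0<r\le 1$, $\theta\in[0,2\pi]$, and set $a=(1-r)e^{i(\theta+r/2)}$. Then for every $z=\rho e^{i\alpha}$ in the Carleson square $S_r^\theta=\{\xi\in\mathbb{D}: 1-r<|\xi|<1,\ |\arg(\xi)-\theta|<r/2\}$, one has $|1-a\bar z|^2 \le 1+|a|^4-2|a|^2\cos(1-|a|)$. -/
open Real

theorem stmt1 (r θ : ℝ) (hr0 : 0 < r) (hr1 : r ≤ 1) (hθ : θ ∈ Set.Icc 0 (2 * π))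
    (a : ℂ) (ha : a = (1 - r : ℝ) * Complex.exp (Complex.I * (θ + r / 2)))
    (ρ α : ℝ) (z : ℂ) (hz : z = (ρ : ℂ) * Complex.exp (Complex.I * α))
    (hρ0 : 1 - r < ρ) (hρ1 : ρ < 1) (hα : |α - θ| < r / 2) :
    ‖1 - a * (starRingEnd ℂ) z‖ ^ 2 ≤
      1 + ‖a‖ ^ 4 - 2 * ‖a‖ ^ 2 * Real.cos (1 - ‖a‖) := by
  have hs0 : (0:ℝ) ≤ 1 - r := by linarith
  set s : ℝ := 1 - r with hsdef
  set t : ℝ := s * ρ with htdef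
  set φ : ℝ := θ + r / 2 - α with hφdef
  have hρpos : 0 < ρ := lt_of_le_of_lt hs0 hρ0
  -- abs a = s
  have habs : ‖a‖ = s := by
    rw [ha]
    rw [show Complex.I * ((θ:ℂ) + (r:ℂ) / 2) = ((θ + r/2 : ℝ) : ℂ) * Complex.I by
      push_cast; ring]
    rw [norm_mul, Complex.norm_exp_ofReal_mul_I, Complex.norm_of_nonneg hs0,
      mul_one]
  -- a * conj z = t * exp(I φ)
  have hkey : a * (starRingEnd ℂ) z = (t:ℝ) * Complex.exp (((φ:ℝ):ℂ) * Complex.I) := by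
    rw [ha, hz, map_mul, Complex.conj_ofReal, ← Complex.exp_conj]
    rw [show (starRingEnd ℂ) (Complex.I * α) = ((-α : ℝ):ℂ) * Complex.I by
      simp [Complex.conj_I]; ring]
    rw [show Complex.I * ((θ:ℂ) + (r:ℂ)/2) = ((θ + r/2 : ℝ):ℂ) * Complex.I by
      push_cast; ring]
    rw [mul_mul_mul_comm, ← Complex.exp_add, ← Complex.ofReal_mul]
    congr 2
    all_goals (push_cast [htdef, hφdef]; ring)
  -- LHS computation
  have hLHS : ‖1 - a * (starRingEnd ℂ) z‖ ^ 2 = 1 - 2 * t * Real.cos φ + t ^ 2 := by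
    rw [hkey, Complex.sq_norm, Complex.normSq_apply]
    simp [Complex.exp_ofReal_mul_I_re, Complex.exp_ofReal_mul_I_im]
    nlinarith [Real.sin_sq_add_cos_sq φ]
  rw [hLHS, habs]
  have h1s : 1 - s = r := by simp [hsdef]
  rw [h1s]
  -- inequalities
  have hφ0 : 0 < φ := by
    have := abs_lt.mp hα
    simp only [hφdef]; linarith [this.2]
  have hφr : φ < r := by
    have := abs_lt.mp hα
    simp only [hφdef]; linarith [this.1]
  have hcos : Real.cos r ≤ Real.cos φ :=
    Real.cos_le_cos_of_nonneg_of_le_pi hφ0.le (by linarith [Real.pi_gt_three]) hφr.le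
  have ht0 : 0 ≤ t := mul_nonneg hs0 hρpos.le
  have hts : s * s ≤ t := by
    apply mul_le_mul_of_nonneg_left hρ0.le hs0
  have hts' : t ≤ s := by
    calc t = s * ρ := rfl
      _ ≤ s * 1 := mul_le_mul_of_nonneg_left hρ1.le hs0
      _ = s := mul_one s
  have hcr : 1 - r ^ 2 / 2 ≤ Real.cos r := Real.one_sub_sq_div_two_le_cos
  -- t + s^2 ≤ 2 cos r
  have hsum : t + s ^ 2 ≤ 2 * Real.cos r := by
    nlinarith
  nlinarith [mul_nonneg (sub_nonneg.mpr hts) (sub_nonneg.mpr hsum),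
    mul_le_mul_of_nonneg_left hcos ht0]
end

section
/- There exists $C_2>0$ such that for all $0<r\le 1$, $\theta\in[0,2\pi]$, with $a=(1-r)e^{i(\theta+r/2)}$, and all $z$ in the Carleson square $S_r^\theta$, the normalized Bergman kernel of the unit disc satisfies $|k_a(z)|^2=\left(\frac{1-|a|^2}{|1-a\bar z|^2}\right)^2 \ge \frac{C_2}{r^2}$. -/
open Real

theorem stmt2 : ∃ C₂ > (0:ℝ), ∀ r θ : ℝ, 0 < r → r ≤ 1 → θ ∈ Set.Icc 0 (2 * π) →
    ∀ a : ℂ, a = (1 - r : ℝ) * Complex.exp (Complex.I * (θ + r / 2)) →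
    ∀ (ρ α : ℝ) (z : ℂ), z = (ρ : ℂ) * Complex.exp (Complex.I * α) →
    1 - r < ρ → ρ < 1 → |α - θ| < r / 2 →
    C₂ / r ^ 2 ≤ ((1 - ‖a‖ ^ 2) / ‖1 - a * (starRingEnd ℂ) z‖ ^ 2) ^ 2 := by
  refine ⟨1/256, by norm_num, ?_⟩
  intro r θ hr hr1 hθ a ha ρ α z hz hρ1 hρ2 hα
  have h1r : (0:ℝ) ≤ 1 - r := by linarith
  have hρ0 : 0 < ρ := lt_of_le_of_lt h1r hρ1
  -- |a| = 1 - r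
  have habs : ‖a‖ = 1 - r := by
    rw [ha, norm_mul, Complex.norm_real, Real.norm_eq_abs, Complex.norm_exp, abs_of_nonneg h1r]
    have : (Complex.I * ((θ:ℂ) + (r:ℂ) / 2)).re = 0 := by
      simp [Complex.mul_re]
    rw [this, Real.exp_zero, mul_one]
  -- key product formula
  have hkey : a * (starRingEnd ℂ) z
      = (((1 - r) * ρ : ℝ) : ℂ) * Complex.exp (Complex.I * (((θ + r/2 - α : ℝ)) : ℂ)) := by
    rw [ha, hz, map_mul, ← Complex.exp_conj, map_mul, Complex.conj_I, Complex.conj_ofReal]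
    rw [show Complex.I * (((θ + r/2 - α : ℝ)) : ℂ)
        = Complex.I * ((θ:ℂ) + (r:ℂ) / 2) + (-Complex.I * (α:ℂ)) by push_cast; ring,
      Complex.exp_add]
    simp only [Complex.conj_ofReal]
    push_cast; ring
  set φ : ℝ := θ + r/2 - α with hφ
  have hφabs : |φ| ≤ r := by
    rw [abs_sub_comm] at hα
    obtain ⟨h1, h2⟩ := abs_lt.mp hα
    rw [abs_le, hφ]
    constructor <;> linarith
  have hφ1 : |φ| ≤ 1 := hφabs.trans hr1
  -- bound on |exp(Iφ) - 1|
  have habsIφ : ‖Complex.I * (φ:ℂ)‖ = |φ| := by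
    rw [norm_mul, Complex.norm_I, Complex.norm_real, Real.norm_eq_abs, one_mul]
  have hexp : ‖Complex.exp (Complex.I * (φ:ℂ)) - 1‖ ≤ 2 * r := by
    have := Complex.norm_exp_sub_one_le (x := Complex.I * (φ:ℂ)) (by rw [habsIφ]; exact hφ1)
    rw [habsIφ] at this
    linarith
  -- split
  have hsplit : 1 - a * (starRingEnd ℂ) z
      = (((1 - (1 - r) * ρ : ℝ)) : ℂ)
        + (((1 - r) * ρ : ℝ) : ℂ) * (1 - Complex.exp (Complex.I * (φ:ℂ))) := by
    rw [hkey]; push_cast; ring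
  set D := ‖1 - a * (starRingEnd ℂ) z‖ with hD
  have h1ρ : (1 - r) * ρ ≤ 1 - r := by nlinarith
  have h1ρ' : (1 - r) * ρ ≥ (1 - r) * (1 - r) := by nlinarith
  have hD_le : D ≤ 4 * r := by
    rw [hD, hsplit]
    calc ‖_‖ ≤ ‖(((1 - (1 - r) * ρ : ℝ)) : ℂ)‖
          + ‖(((1 - r) * ρ : ℝ) : ℂ) * (1 - Complex.exp (Complex.I * (φ:ℂ)))‖ :=
            norm_add_le _ _
      _ ≤ 2 * r + 2 * r := by
          gcongr
          · rw [Complex.norm_real, Real.norm_eq_abs, abs_of_nonneg (by nlinarith)]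
            nlinarith
          · rw [norm_mul, Complex.norm_real, Real.norm_eq_abs, abs_of_nonneg (by positivity)]
            have h2 : ‖1 - Complex.exp (Complex.I * (φ:ℂ))‖ ≤ 2 * r := by
              rw [← norm_neg]; simpa using hexp
            calc (1 - r) * ρ * ‖1 - Complex.exp (Complex.I * (φ:ℂ))‖
                ≤ 1 * (2 * r) := by
                  apply mul_le_mul (by nlinarith) h2 (norm_nonneg _) zero_le_one
              _ = 2 * r := one_mul _
      _ = 4 * r := by ring
  have hD_ge : r ≤ D := by
    have : ‖a * (starRingEnd ℂ) z‖ = (1 - r) * ρ := by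
      rw [hkey, norm_mul, Complex.norm_real, Real.norm_eq_abs, Complex.norm_exp,
        abs_of_nonneg (by positivity)]
      have : (Complex.I * ((φ:ℝ) : ℂ)).re = 0 := by simp [Complex.mul_re]
      rw [this, Real.exp_zero, mul_one]
    have h := norm_sub_norm_le (1 : ℂ) (a * (starRingEnd ℂ) z)
    rw [norm_one, this] at h
    have : (1 - r) * ρ ≤ 1 - r := h1ρ
    linarith
  have hDpos : 0 < D := lt_of_lt_of_le hr hD_ge
  have hA : r ≤ 1 - ‖a‖ ^ 2 := by rw [habs]; nlinarith
  have hstep : 1 / (16 * r) ≤ (1 - ‖a‖ ^ 2) / D ^ 2 := by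
    rw [div_le_div_iff₀ (by positivity) (by positivity)]
    nlinarith [sq_nonneg D, hD_le, hD_ge]
  calc 1/256 / r ^ 2 = (1 / (16 * r)) ^ 2 := by field_simp; ring
    _ ≤ ((1 - ‖a‖ ^ 2) / D ^ 2) ^ 2 := by
        apply pow_le_pow_left₀ (by positivity) hstep
end
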